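/- If players i and h are equivalent in a (j,k) simple game v, then they are equivalent in the average game: ṽ(S ∪ {i}) = ṽ(S ∪ {h}) for all S ⊆ N \ {i, h}. -/
import Mathlib


open Finset BigOperators

attribute [local instance] Classical.propDecidable

noncomputable section

variable {n j k : ℕ}

/-- The top element `j-1` of `Fin j`. -/
def topF (j : ℕ) [NeZero j] : Fin j :=
  ⟨j - 1, Nat.sub_lt (Nat.pos_of_ne_zero (NeZero.ne j)) one_pos⟩

/-- The profile equal to the constant `c` on `S` and to `x` off `S`. -/
def mer (S : Finset (Fin n)) (c : Fin j) (x : Fin n → Fin j) : Fin n → Fin j :=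
  fun i => if i ∈ S then c else x i

/-- `(j,k)` simple game: `v 0 = 0`, `v (j-1,…,j-1) = k-1`, monotone. -/
def IsJKGame [NeZero j] [NeZero k] (v : (Fin n → Fin j) → Fin k) : Prop :=
  v (fun _ => 0) = 0 ∧ v (fun _ => topF j) = topF k ∧
    ∀ x y : Fin n → Fin j, (∀ i, x i ≤ y i) → v x ≤ v y

/-- The `(j,k)` simple game with point-veto `a`. -/
def uA [NeZero j] [NeZero k] (a : Fin n → Fin j) (x : Fin n → Fin j) : Fin k :=
  if ∀ i, a i ≤ x i then topF k else 0

/-- The veto game associated with a set `E` of thresholds. -/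
def uE [NeZero j] [NeZero k] (E : Set (Fin n → Fin j)) (x : Fin n → Fin j) : Fin k :=
  if ∃ a ∈ E, ∀ i, a i ≤ x i then topF k else 0

/-- Player `i` is a null player of `v`. -/
def NullPlayer [NeZero j] [NeZero k] (v : (Fin n → Fin j) → Fin k) (i : Fin n) : Prop :=
  ∀ (x : Fin n → Fin j) (y : Fin j), v x = v (Function.update x i y)

/-- Players `i` and `h` are equivalent in `v`. -/
def EquivPlayers [NeZero j] [NeZero k] (v : (Fin n → Fin j) → Fin k) (i h : Fin n) : Prop :=
  ∀ x : Fin n → Fin j, v x = v (x ∘ Equiv.swap i h)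

/-- The average game `ṽ(T) = (1/(jⁿ(k-1))) Σ_x [v((j-1)_T, x_{-T}) - v(0_T, x_{-T})]`. -/
def Cfun [NeZero j] [NeZero k] (v : (Fin n → Fin j) → Fin k) (T : Finset (Fin n)) : ℝ :=
  (1 / ((j : ℝ) ^ n * ((k : ℝ) - 1))) *
    ∑ x : Fin n → Fin j,
      (((v (mer T (topF j) x)).val : ℝ) - ((v (mer T 0 x)).val : ℝ))

/-- The Shapley-Shubik index for `(j,k)` simple games. -/
def Phi [NeZero j] [NeZero k] (v : (Fin n → Fin j) → Fin k) (i : Fin n) : ℝ :=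
  ∑ S ∈ univ.filter (fun S : Finset (Fin n) => i ∈ S),
    ((Nat.factorial (S.card - 1) * Nat.factorial (n - S.card) : ℝ) / (Nat.factorial n : ℝ)) *
      (Cfun v S - Cfun v (S.erase i))

/-- The TU game `v_a(S) = (1/(k-1))[v((j-1)_S, a_{-S}) - v(0_S, a_{-S})]`. -/
def vAgame [NeZero j] [NeZero k] (v : (Fin n → Fin j) → Fin k) (a : Fin n → Fin j)
    (S : Finset (Fin n)) : ℝ :=
  (1 / ((k : ℝ) - 1)) * (((v (mer S (topF j) a)).val : ℝ) - ((v (mer S 0 a)).val : ℝ))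

/-- The parametric power index `Φ^a`. -/
def PhiA [NeZero j] [NeZero k] (v : (Fin n → Fin j) → Fin k) (a : Fin n → Fin j) (i : Fin n) : ℝ :=
  ∑ S ∈ univ.filter (fun S : Finset (Fin n) => i ∈ S),
    ((Nat.factorial (S.card - 1) * Nat.factorial (n - S.card) : ℝ) / (Nat.factorial n : ℝ)) *
      (vAgame v a S - vAgame v a (S.erase i))

/-- The game `w^C`: value `k-1` iff all members of `C` give full support. -/
def wCgame [NeZero j] [NeZero k] (C : Finset (Fin n)) : (Fin n → Fin j) → Fin k :=
  uA (fun i => if i ∈ C then topF j else 0)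

/-- The unanimity TU game `γ_S`. -/
def gammaTU (S T : Finset (Fin n)) : ℝ :=
  if S ⊆ T then 1 else 0

end

theorem stmt12 {n j k : ℕ} [NeZero j] [NeZero k] (hj : 2 ≤ j) (hk : 2 ≤ k)
    (v : (Fin n → Fin j) → Fin k) (hv : IsJKGame v) (i h : Fin n)
    (heq : EquivPlayers v i h) :
    ∀ S : Finset (Fin n), i ∉ S → h ∉ S →
      Cfun v (insert i S) = Cfun v (insert h S) := by
  intro S hiS hhS
  rcases eq_or_ne i h with rfl | hih
  · rfl
  have key : ∀ (c : Fin j) (x : Fin n → Fin j),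
      mer (insert i S) c (x ∘ Equiv.swap i h) = (mer (insert h S) c x) ∘ (Equiv.swap i h) := by
    intro c x
    funext p
    simp only [mer, Function.comp_apply, mem_insert]
    have hmem : (p = i ∨ p ∈ S) ↔ (Equiv.swap i h p = h ∨ Equiv.swap i h p ∈ S) := by
      rcases eq_or_ne p i with rfl | hpi
      · simp [Equiv.swap_apply_left]
      rcases eq_or_ne p h with rfl | hph
      · simp [Equiv.swap_apply_right, hih, Ne.symm hih, hiS, hhS]
      · rw [Equiv.swap_apply_of_ne_of_ne hpi hph]
        constructor
        · rintro (rfl | hp)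
          · exact absurd rfl hpi
          · exact Or.inr hp
        · rintro (rfl | hp)
          · exact absurd rfl hph
          · exact Or.inr hp
    by_cases hc : p = i ∨ p ∈ S
    · rw [if_pos hc, if_pos (hmem.mp hc)]
    · rw [if_neg hc, if_neg (fun hh => hc (hmem.mpr hh))]
  unfold Cfun
  congr 1
  refine Fintype.sum_equiv ((Equiv.swap i h).arrowCongr (Equiv.refl (Fin j))) _ _ ?_
  intro x
  have hx : ((Equiv.swap i h).arrowCongr (Equiv.refl (Fin j))) x = x ∘ Equiv.swap i h := by
    funext p
    simp [Equiv.arrowCongr]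
  have hxx : (x ∘ Equiv.swap i h) ∘ Equiv.swap i h = x := by
    funext p
    simp
  have e1 := key (topF j) (x ∘ Equiv.swap i h)
  have e2 := key (0 : Fin j) (x ∘ Equiv.swap i h)
  rw [hxx] at e1 e2
  rw [hx, e1, e2, ← heq (mer (insert h S) (topF j) (x ∘ Equiv.swap i h)),
    ← heq (mer (insert h S) 0 (x ∘ Equiv.swap i h))]
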